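/- In the tandem fluid queue setting, for every mode i ∈ I and every q1 ∈ ℝ, min(v·q1, c1(i), w·(θ − q2up)) ≤ min(v·q2up, c2(i)); equivalently, the downstream drift f12(i, (q1, q2up)) − f2(i, (q1, q2up)) is nonpositive on the upper q2-boundary of the invariant set. -/

import Mathlib

/-- Third boundary inequality in the proof of Proposition 1 (tandem fluid queue):
on the upper `q2`-boundary `q2 = q2up = θ - c2min / w` of the invariant set, the
downstream drift `f12(i, (q1, q2up)) - f2(i, (q1, q2up))` is nonpositive for every
mode `i` and every `q1`. -/
theorem tandem_upper_q2_boundary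
    {I : Type*} [Fintype I] [Nonempty I]
    (v w θ : ℝ) (hv : 0 < v) (hw : 0 < w) (hθ : 0 < θ)
    (c1 c2 : I → ℝ) (hc1 : ∀ i, 0 < c1 i) (hc2 : ∀ i, 0 < c2 i)
    (cmax c2min : ℝ)
    (hcmax : cmax = Finset.univ.sup' Finset.univ_nonempty (fun i => max (c1 i) (c2 i)))
    (hc2min : c2min = Finset.univ.inf' Finset.univ_nonempty c2)
    (hcap : cmax ≤ v * w * θ / (v + w))
    (q2up : ℝ) (hq2up : q2up = θ - c2min / w) :
    ∀ (i : I) (q1 : ℝ),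
      min (v * q1) (min (c1 i) (w * (θ - q2up))) ≤ min (v * q2up) (c2 i) := by
  intro i q1
  obtain ⟨j⟩ := ‹Nonempty I›
  -- c2min ≤ c2 i for all i
  have hle : ∀ k, c2min ≤ c2 k := fun k => by
    rw [hc2min]; exact Finset.inf'_le _ (Finset.mem_univ k)
  -- c2min ≤ cmax
  have hmc : c2min ≤ cmax := by
    calc c2min ≤ c2 j := hle j
    _ ≤ max (c1 j) (c2 j) := le_max_right _ _
    _ ≤ cmax := by rw [hcmax]; exact Finset.le_sup' (fun i => max (c1 i) (c2 i)) (Finset.mem_univ j)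
  have hcm : c2min ≤ v * w * θ / (v + w) := hmc.trans hcap
  have hvw : 0 < v + w := by linarith
  -- key: w * (θ - q2up) = c2min
  have hkey : w * (θ - q2up) = c2min := by
    rw [hq2up]; field_simp; ring
  -- v * q2up ≥ c2min
  have h2 : c2min ≤ v * q2up := by
    rw [hq2up]
    rw [le_div_iff₀ hvw] at hcm
    have : c2min / w * w = c2min := div_mul_cancel₀ _ hw.ne'
    nlinarith [this, hcm, mul_pos hv hw]
  have hmin : min (v * q1) (min (c1 i) (w * (θ - q2up))) ≤ c2min := by
    rw [hkey]
    exact le_trans (min_le_right _ _) (min_le_right _ _)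
  exact le_min (hmin.trans h2) (hmin.trans (hle i))
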